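/- In the essential intersection type system, if Γ ⊢ λx.M : μ for a strict type μ, then there exist σ and ν such that μ ∼ σ → ν and Γ, x : σ ⊢ M : ν. -/
import Mathlib


/-- Terms of the λ⊥-calculus (de Bruijn indices). -/
inductive Tm : Type
  | var : ℕ → Tm
  | bot : Tm
  | lam : Tm → Tm
  | app : Tm → Tm → Tm
  deriving DecidableEq

namespace Tm

/-- Lift (shift by one) all de Bruijn indices ≥ k. -/
def lift : Tm → ℕ → Tm
  | var n, k => if n < k then var n else var (n+1)
  | bot, _ => bot
  | lam M, k => lam (lift M (k+1))
  | app M N, k => app (lift M k) (lift N k)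

/-- Capture-avoiding substitution of N for variable k. -/
def subst : Tm → ℕ → Tm → Tm
  | var n, k, N => if n < k then var n else if n = k then N else var (n-1)
  | bot, _, _ => bot
  | lam M, k, N => lam (subst M (k+1) (lift N 0))
  | app M P, k, N => app (subst M k N) (subst P k N)

/-- One-step β⊥-reduction (compatible closure). -/
inductive Step : Tm → Tm → Prop
  | beta (M N : Tm) : Step (app (lam M) N) (subst M 0 N)
  | botApp (N : Tm) : Step (app bot N) bot
  | botLam : Step (lam bot) bot
  | appL {M M'} (N) : Step M M' → Step (app M N) (app M' N)
  | appR (M) {N N'} : Step N N' → Step (app M N) (app M N')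
  | lamC {M M'} : Step M M' → Step (lam M) (lam M')

/-- Multi-step reduction. -/
def Red : Tm → Tm → Prop := Relation.ReflTransGen Step

/-- β⊥-conversion: M = N iff they have a common reduct. -/
def Conv (M N : Tm) : Prop := ∃ P, Red M P ∧ Red N P

/-- The identity combinator I = λx.x. -/
def iTm : Tm := lam (var 0)

/-- Composition M ∘ N = λz.M(Nz). -/
def comp (M N : Tm) : Tm := lam (app (lift M 0) (app (lift N 0) (var 0)))

/-- Apply M to a list of arguments. -/
def applist (M : Tm) (Ms : List Tm) : Tm := Ms.foldl app M

/-- Iterated λ-abstraction. -/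
def iterLam : ℕ → Tm → Tm
  | 0, M => M
  | n+1, M => lam (iterLam n M)

/-- The selector λt x₁ … xₘ. t  (a simple right inverse). -/
def sel (m : ℕ) : Tm := iterLam (m+1) (var m)

/-- Number of initial λ-abstractions of a term. -/
def leadLams : Tm → ℕ
  | lam M => leadLams M + 1
  | _ => 0

end Tm

mutual
/-- Strict intersection types μ ::= φ | ω | σ → μ. -/
inductive STy : Type
  | tvar : ℕ → STy
  | omega : STy
  | arrow : ITy → STy → STy
/-- Intersections σ ::= μ | σ ∧ σ. -/
inductive ITy : Type
  | strict : STy → ITy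
  | inter : ITy → ITy → ITy
end

/-- The subtyping preorder on (strict) intersection types. -/
inductive SubTy : ITy → ITy → Prop
  | refl (σ) : SubTy σ σ
  | trans {σ τ ρ} : SubTy σ τ → SubTy τ ρ → SubTy σ ρ
  | toOmega (σ) : SubTy σ (.strict .omega)
  | omegaArr : SubTy (.strict .omega) (.strict (.arrow (.strict .omega) .omega))
  | interL (σ τ) : SubTy (.inter σ τ) σ
  | interR (σ τ) : SubTy (.inter σ τ) τ
  | interMono {σ₁ σ₂ τ₁ τ₂} : SubTy σ₁ τ₁ → SubTy σ₂ τ₂ → SubTy (.inter σ₁ σ₂) (.inter τ₁ τ₂)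
  | arrow {σ τ : ITy} {μ ν : STy} : SubTy τ σ → SubTy (.strict μ) (.strict ν) →
      SubTy (.strict (.arrow σ μ)) (.strict (.arrow τ ν))

/-- σ ∼ τ : mutual subtyping. -/
def EqvTy (σ τ : ITy) : Prop := SubTy σ τ ∧ SubTy τ σ

/-- μ is a conjunct (component) of the intersection σ. -/
inductive IsComp : STy → ITy → Prop
  | strict (μ) : IsComp μ (.strict μ)
  | left {μ σ} (τ) : IsComp μ σ → IsComp μ (.inter σ τ)
  | right {μ τ} (σ) : IsComp μ τ → IsComp μ (.inter σ τ)

/-- The essential intersection type assignment system (contexts are de Bruijn lists). -/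
inductive Der : List ITy → Tm → STy → Prop
  | var {Γ n σ μ} : Γ[n]? = some σ → IsComp μ σ → Der Γ (.var n) μ
  | omega (Γ M) : Der Γ M .omega
  | sub {Γ M μ ν} : Der Γ M μ → SubTy (.strict μ) (.strict ν) → Der Γ M ν
  | lam {Γ M σ μ} : Der (σ :: Γ) M μ → Der Γ (.lam M) (.arrow σ μ)
  | app {Γ M N σ μ} : Der Γ M (.arrow σ μ) → (∀ ν, IsComp ν σ → Der Γ N ν) →
      Der Γ (.app M N) μ

/-- A strict type is inhabited if some closed term has it. -/
def InhabS (μ : STy) : Prop := ∃ M, Der [] M μ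

/-- An intersection is inhabited if a single closed term has all its conjuncts. -/
def InhabI (σ : ITy) : Prop := ∃ M, ∀ μ, IsComp μ σ → Der [] M μ

/-- σ → ρ is inhabited: one term inhabits σ → μ for every conjunct μ of ρ. -/
def InhabArrow (σ ρ : ITy) : Prop := ∃ M, ∀ μ, IsComp μ ρ → Der [] M (.arrow σ μ)

/-- ρ₁ → … → ρₘ → μ. -/
def arrows (l : List ITy) (μ : STy) : STy := l.foldr .arrow μ

/-- μ ◁ ν : μ is a retract of ν. -/
def Retract (μ ν : STy) : Prop :=
  ∃ L R, Der [] L (.arrow (.strict ν) μ) ∧ Der [] R (.arrow (.strict μ) ν) ∧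
    Tm.Conv (Tm.comp L R) Tm.iTm

/-- ω-like strict types: σ₁ → … → σₖ → ω. -/
inductive OmL : STy → Prop
  | omega : OmL .omega
  | arrow (σ) {μ} : OmL μ → OmL (.arrow σ μ)

theorem omega_le_oml {μ : STy} (h : OmL μ) : SubTy (.strict .omega) (.strict μ) := by
  induction h with
  | omega => exact SubTy.refl _
  | arrow σ _ ih =>
      exact SubTy.trans SubTy.omegaArr (SubTy.arrow (SubTy.toOmega σ) ih)

theorem le_of_comp {μ : STy} {σ : ITy} (h : IsComp μ σ) : SubTy σ (.strict μ) := by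
  induction h with
  | strict => exact SubTy.refl _
  | left τ _ ih => exact SubTy.trans (SubTy.interL _ _) ih
  | right τ _ ih => exact SubTy.trans (SubTy.interR _ _) ih

/-- Syntactic characterization of strict-to-strict subtyping. -/
inductive QS : STy → STy → Prop
  | refl (μ) : QS μ μ
  | oml {μ ν} : OmL ν → QS μ ν
  | arrow {σ ρ τ κ} : SubTy τ σ → QS ρ κ → QS (.arrow σ ρ) (.arrow τ κ)

theorem QS.toSub {μ ν : STy} (h : QS μ ν) : SubTy (.strict μ) (.strict ν) := by
  induction h with
  | refl μ => exact SubTy.refl _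
  | oml hν => exact SubTy.trans (SubTy.toOmega _) (omega_le_oml hν)
  | arrow hts _ ih => exact SubTy.arrow hts ih

theorem QS.oml_mono {μ ν : STy} (h : QS μ ν) (hμ : OmL μ) : OmL ν := by
  induction h with
  | refl => exact hμ
  | oml hν => exact hν
  | arrow _ _ ih =>
      cases hμ with
      | arrow _ hρ => exact OmL.arrow _ (ih hρ)

theorem QS.trans : ∀ {a b c : STy}, QS a b → QS b c → QS a c := by
  intro a b c h1 h2
  induction h1 generalizing c with
  | refl => exact h2
  | oml hb =>
      exact QS.oml (h2.oml_mono hb)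
  | @arrow σ ρ τ κ hts hq ih =>
      cases h2 with
      | refl => exact QS.arrow hts hq
      | oml hc => exact QS.oml hc
      | arrow hts' hq' => exact QS.arrow (SubTy.trans hts' hts) (ih hq')

/-- Soundness of the characterization. -/
theorem sub_sound {σ τ : ITy} (h : SubTy σ τ) :
    ∀ ν, IsComp ν τ → OmL ν ∨ ∃ μ, IsComp μ σ ∧ QS μ ν := by
  induction h with
  | refl σ => exact fun ν hν => Or.inr ⟨ν, hν, QS.refl ν⟩
  | trans _ _ ih1 ih2 =>
      intro ν hν
      rcases ih2 ν hν with ho | ⟨μ', hμ', hq'⟩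
      · exact Or.inl ho
      · rcases ih1 μ' hμ' with ho | ⟨μ, hμ, hq⟩
        · exact Or.inl (hq'.oml_mono ho)
        · exact Or.inr ⟨μ, hμ, hq.trans hq'⟩
  | toOmega σ =>
      intro ν hν; cases hν; exact Or.inl OmL.omega
  | omegaArr =>
      intro ν hν; cases hν; exact Or.inl (OmL.arrow _ OmL.omega)
  | interL σ τ =>
      exact fun ν hν => Or.inr ⟨ν, IsComp.left _ hν, QS.refl ν⟩
  | interR σ τ =>
      exact fun ν hν => Or.inr ⟨ν, IsComp.right _ hν, QS.refl ν⟩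
  | interMono _ _ ih1 ih2 =>
      intro ν hν
      cases hν with
      | left _ hν =>
          rcases ih1 ν hν with ho | ⟨μ, hμ, hq⟩
          · exact Or.inl ho
          · exact Or.inr ⟨μ, IsComp.left _ hμ, hq⟩
      | right _ hν =>
          rcases ih2 ν hν with ho | ⟨μ, hμ, hq⟩
          · exact Or.inl ho
          · exact Or.inr ⟨μ, IsComp.right _ hμ, hq⟩
  | @arrow σ τ μ ν hts _ _ ih2 =>
      intro ν' hν'
      cases hν'
      rcases ih2 ν (IsComp.strict ν) with ho | ⟨μ'', hμ'', hq⟩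
      · exact Or.inl (OmL.arrow _ ho)
      · cases hμ''
        exact Or.inr ⟨_, IsComp.strict _, QS.arrow hts hq⟩

theorem sub_strict_inv {σ : ITy} {ν : STy} (h : SubTy σ (.strict ν)) :
    OmL ν ∨ ∃ μ, IsComp μ σ ∧ SubTy (.strict μ) (.strict ν) := by
  rcases sub_sound h ν (IsComp.strict ν) with ho | ⟨μ, hμ, hq⟩
  · exact Or.inl ho
  · exact Or.inr ⟨μ, hμ, hq.toSub⟩

theorem sub_arrow_inv {σ : ITy} {ρ ν : STy}
    (h : SubTy (.strict (.arrow σ ρ)) (.strict ν)) :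
    OmL ν ∨ ∃ τ κ, ν = .arrow τ κ ∧ SubTy τ σ ∧ SubTy (.strict ρ) (.strict κ) := by
  rcases sub_sound h ν (IsComp.strict ν) with ho | ⟨μ, hμ, hq⟩
  · exact Or.inl ho
  · cases hμ
    cases hq with
    | refl => exact Or.inr ⟨σ, ρ, rfl, SubTy.refl _, SubTy.refl _⟩
    | oml ho => exact Or.inl ho
    | arrow hts hq => exact Or.inr ⟨_, _, rfl, hts, hq.toSub⟩

/-- Context subsumption. -/
theorem der_ctx {Γ : List ITy} {M : Tm} {μ : STy} (h : Der Γ M μ) :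
    ∀ Γ' : List ITy, (∀ (n : ℕ) (σ : ITy), Γ[n]? = some σ → ∃ σ', Γ'[n]? = some σ' ∧ SubTy σ' σ) →
      Der Γ' M μ := by
  induction h with
  | @var Γ n σ μ hn hc =>
      intro Γ' hΓ
      rcases hΓ n σ hn with ⟨σ', hn', hs⟩
      have hσ' : SubTy σ' (.strict μ) := SubTy.trans hs (le_of_comp hc)
      rcases sub_strict_inv hσ' with ho | ⟨μ', hμ', hsub⟩
      · exact Der.sub (Der.omega _ _) (omega_le_oml ho)
      · exact Der.sub (Der.var hn' hμ') hsub
  | omega Γ M => exact fun Γ' _ => Der.omega Γ' M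
  | sub _ hs ih => exact fun Γ' hΓ => Der.sub (ih Γ' hΓ) hs
  | @lam Γ M σ μ _ ih =>
      intro Γ' hΓ
      refine Der.lam (ih (σ :: Γ') ?_)
      intro n τ hn
      cases n with
      | zero =>
          simp only [List.getElem?_cons_zero, Option.some.injEq] at hn
          exact ⟨σ, by simp, hn ▸ SubTy.refl σ⟩
      | succ n =>
          simp only [List.getElem?_cons_succ] at hn ⊢
          exact hΓ n τ hn
  | app _ _ ih1 ih2 =>
      intro Γ' hΓ
      exact Der.app (ih1 Γ' hΓ) (fun ν hν => ih2 ν hν Γ' hΓ)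

/-- inversion for abstractions. -/
theorem inversion_lam {Γ : List ITy} {M : Tm} {μ : STy} (h : Der Γ (.lam M) μ) :
    ∃ σ ν, EqvTy (.strict μ) (.strict (.arrow σ ν)) ∧ Der (σ :: Γ) M ν := by
  generalize hL : Tm.lam M = L at h
  induction h with
  | var _ _ => exact Tm.noConfusion hL
  | omega Γ' M' =>
      exact ⟨.strict .omega, .omega,
        ⟨SubTy.omegaArr, SubTy.toOmega _⟩, Der.omega _ _⟩
  | sub _ hs ih =>
      rcases ih hL with ⟨σ, ρ, ⟨h1, h2⟩, hd⟩
      have hsa : SubTy (.strict (.arrow σ ρ)) (.strict _) := SubTy.trans h2 hs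
      rcases sub_arrow_inv hsa with ho | ⟨τ, κ, hνe, hts, hκ⟩
      · refine ⟨.strict .omega, .omega,
          ⟨SubTy.trans (SubTy.toOmega _) SubTy.omegaArr,
           SubTy.trans (SubTy.toOmega _) (omega_le_oml ho)⟩, Der.omega _ _⟩
      · subst hνe
        refine ⟨τ, κ, ⟨SubTy.refl _, SubTy.refl _⟩, ?_⟩
        refine Der.sub (der_ctx hd (τ :: _) ?_) hκ
        intro n σ' hn
        cases n with
        | zero =>
            simp only [List.getElem?_cons_zero, Option.some.injEq] at hn
            exact ⟨τ, by simp, hn ▸ hts⟩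
        | succ n =>
            exact ⟨σ', hn, SubTy.refl _⟩
  | lam hd _ =>
      cases hL
      exact ⟨_, _, ⟨SubTy.refl _, SubTy.refl _⟩, hd⟩
  | app _ _ _ _ => exact Tm.noConfusion hL
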